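/- arXiv:2404.11007 — 2 statements merged into one kernel-verified Lean document; each statement's English description precedes it below -/
import Mathlib

section
/- Let the finite index set S be partitioned into a retained set R and an eliminated set E. Let K be a real S×S matrix and t ∈ ℝ^S a vector, written in block form K = [[K_RR, K_RE],[K_ER, K_EE]], t = (t_R, t_E). Assume I - K_EE is invertible. Define the reduced transition probability matrix K̂ = K_RR + K_RE (I - K_EE)⁻¹ K_ER and reduced residence time vector t̂ = t_R + K_RE (I - K_EE)⁻¹ t_E on R. If τ ∈ ℝ^S satisfies (I - K) τ = t, then its restriction τ_R to R satisfies (I - K̂) τ_R = t̂. In particular, removing milestones outside the core sets with the adjusted transition probabilities and residence times leaves the mean first passage times at all retained milestones unchanged. -/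
open Matrix

/-- Eliminating a set `E` of milestones (the second summand of the index type) via the
block-elimination formulas `K̂ = K_RR + K_RE (I - K_EE)⁻¹ K_ER` and
`t̂ = t_R + K_RE (I - K_EE)⁻¹ t_E` preserves the mean first passage times at the retained
milestones: if `(I - K) τ = t` then `(I - K̂) τ_R = t̂`. -/
theorem block_elimination_preserves_mfpt
    (R E : Type*) [Fintype R] [Fintype E] [DecidableEq R] [DecidableEq E]
    (K : Matrix (R ⊕ E) (R ⊕ E) ℝ) (t τ : R ⊕ E → ℝ)
    (hinv : IsUnit (1 - K.toBlocks₂₂))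
    (h : Matrix.mulVec (1 - K) τ = t) :
    Matrix.mulVec
        (1 - (K.toBlocks₁₁ + K.toBlocks₁₂ * (1 - K.toBlocks₂₂)⁻¹ * K.toBlocks₂₁))
        (τ ∘ Sum.inl)
      = (t ∘ Sum.inl) + Matrix.mulVec (K.toBlocks₁₂ * (1 - K.toBlocks₂₂)⁻¹) (t ∘ Sum.inr) := by
  set A := K.toBlocks₁₁
  set B := K.toBlocks₁₂
  set C := K.toBlocks₂₁
  set D := K.toBlocks₂₂
  set x := τ ∘ Sum.inl
  set y := τ ∘ Sum.inr
  set tR := t ∘ Sum.inl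
  set tE := t ∘ Sum.inr
  have hKl : ∀ r, (K.mulVec τ) (Sum.inl r) = (A.mulVec x + B.mulVec y) r := by
    intro r
    simp [Matrix.mulVec, dotProduct, Fintype.sum_sum_type, A, B, x, y,
      Matrix.toBlocks₁₁, Matrix.toBlocks₁₂]
  have hKr : ∀ e, (K.mulVec τ) (Sum.inr e) = (C.mulVec x + D.mulVec y) e := by
    intro e
    simp [Matrix.mulVec, dotProduct, Fintype.sum_sum_type, C, D, x, y,
      Matrix.toBlocks₂₁, Matrix.toBlocks₂₂]
  have h1 : x - (A.mulVec x + B.mulVec y) = tR := by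
    funext r
    have := congrFun h (Sum.inl r)
    rw [Matrix.sub_mulVec, Matrix.one_mulVec] at this
    simpa [hKl r, tR, x] using this
  have h2 : y - (C.mulVec x + D.mulVec y) = tE := by
    funext e
    have := congrFun h (Sum.inr e)
    rw [Matrix.sub_mulVec, Matrix.one_mulVec] at this
    simpa [hKr e, tE, y] using this
  have hdet : IsUnit (1 - D).det := (Matrix.isUnit_iff_isUnit_det _).mp hinv
  have h2' : (1 - D).mulVec y = tE + C.mulVec x := by
    rw [Matrix.sub_mulVec, Matrix.one_mulVec]
    funext e
    have := congrFun h2 e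
    simp only [Pi.sub_apply, Pi.add_apply] at this ⊢
    linarith
  have hy : y = (1 - D)⁻¹.mulVec (tE + C.mulVec x) := by
    rw [← h2', Matrix.mulVec_mulVec, Matrix.nonsing_inv_mul _ hdet, Matrix.one_mulVec]
  rw [Matrix.sub_mulVec, Matrix.one_mulVec, Matrix.add_mulVec]
  rw [← h1, hy]
  simp only [← Matrix.mulVec_mulVec, Matrix.mulVec_add]
  funext r
  simp only [Pi.sub_apply, Pi.add_apply]
  ring
end

section
/- Let α, β, γ, η ∈ ℝ with 0 ≤ α, β, γ, η ≤ 1 and (1-α)β < 1, and let t_a, t_b, t_c, t_d ∈ ℝ. Consider the one-dimensional four-state network a–b–c–d in which a transitions to b with probability 1-γ (and to its left neighbor with probability γ), b transitions to a with probability α and to c with probability 1-α, c transitions to b with probability β and to d with probability 1-β, and d transitions to c with probability η (and to its right neighbor with probability 1-η). Let route 1 eliminate states b and c directly via the block-elimination formulas K̂ = K_RR + K_RE (I - K_EE)⁻¹ K_ER and t̂ = t_R + K_RE (I - K_EE)⁻¹ t_E with E = {b, c}. Let route 2 first replace the mutual transitions between b and c by the adjusted values K^{(A')}_{ba} = α/(1+(α-1)β),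 K^{(A')}_{bd} = (1-α)(1-β)/(1+(α-1)β), K^{(A')}_{ca} = αβ/(1+(α-1)β), K^{(A')}_{cd} = (1-β)/(1+(α-1)β), K^{(A')}_{bc} = K^{(A')}_{cb} = 0, with residence times t^{(A')}_b = (t_b+(1-α)t_c)/(1+(α-1)β) and t^{(A')}_c = (β t_b + t_c)/(1+(α-1)β), and then eliminate b and c by the same block-elimination formulas. Then both routes yield identical reduced transition probabilities between a and d and identical reduced residence times t̂_a and t̂_d. -/
open Matrix

/-- For the one-dimensional four-state network `a–b–c–d`, directly eliminating the states
`b, c` (route 1) and first making `b, c` mutually invisible with the adjusted transition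
probabilities and residence times of the paper's Appendix B and then eliminating them
(route 2) yield identical reduced transition probabilities between `a` and `d` and
identical reduced residence times. -/
theorem two_reduction_routes_agree
    (α β γ η ta tb tc td : ℝ)
    (hα0 : 0 ≤ α) (hα1 : α ≤ 1) (hβ0 : 0 ≤ β) (hβ1 : β ≤ 1)
    (hγ0 : 0 ≤ γ) (hγ1 : γ ≤ 1) (hη0 : 0 ≤ η) (hη1 : η ≤ 1)
    (hab : (1 - α) * β < 1)
    (K12 K21 K22 K21' : Matrix (Fin 2) (Fin 2) ℝ) (tR tE tE' : Fin 2 → ℝ)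
    (hK12 : K12 = !![1 - γ, 0; 0, η])
    (hK21 : K21 = !![α, 0; 0, 1 - β])
    (hK22 : K22 = !![0, 1 - α; β, 0])
    (hK21' : K21' = !![α / (1 + (α - 1) * β), (1 - α) * (1 - β) / (1 + (α - 1) * β);
                       α * β / (1 + (α - 1) * β), (1 - β) / (1 + (α - 1) * β)])
    (htR : tR = ![ta, td]) (htE : tE = ![tb, tc])
    (htE' : tE' = ![(tb + (1 - α) * tc) / (1 + (α - 1) * β),
                    (β * tb + tc) / (1 + (α - 1) * β)]) :
    K12 * (1 - K22)⁻¹ * K21 = K12 * K21' ∧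
    tR + Matrix.mulVec (K12 * (1 - K22)⁻¹) tE = tR + Matrix.mulVec K12 tE' := by
  subst hK12 hK21 hK22 hK21' htR htE htE'
  have hd : 1 + (α - 1) * β ≠ 0 := by nlinarith
  have hinv : (1 - !![0, 1 - α; β, (0:ℝ)])⁻¹ =
      (1 + (α - 1) * β)⁻¹ • !![1, 1 - α; β, 1] := by
    have hd' : 1 - β + β * α ≠ 0 := by intro h; apply hd; linarith
    apply Matrix.inv_eq_right_inv
    have h1 : (1 : Matrix (Fin 2) (Fin 2) ℝ) = !![1, 0; 0, 1] := by
      ext i j; fin_cases i <;> fin_cases j <;> simp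
    rw [h1]
    ext i j
    fin_cases i <;> fin_cases j <;>
      simp [Matrix.mul_apply, Fin.sum_univ_succ, Matrix.smul_apply] <;>
      field_simp <;> ring_nf <;> field_simp <;> ring
  rw [hinv]
  constructor
  · ext i j
    fin_cases i <;> fin_cases j <;>
      simp [Matrix.mul_apply, Fin.sum_univ_succ, Matrix.smul_apply] <;>
      field_simp <;> ring
  · funext i
    fin_cases i <;>
      simp [Matrix.mulVec, Matrix.mul_apply, dotProduct, Fin.sum_univ_succ,
        Matrix.smul_apply] <;>
      field_simp <;> ring
end
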